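/- There exists a constant c > 0 such that the following holds. If G, H, W, k, n satisfy Assumption (★) with constant c, then G contains no cycle of length ℓ with n−k ≤ ℓ ≤ n−1 that passes through all problematic vertices of G. -/

import Mathlib

open Finset

/-- `σ` lists the vertices of `G` in the order of a Hamilton cycle `H`:
it is a bijection from `ZMod n` such that consecutive indices give adjacent vertices. -/
def IsHamOrder {V : Type} [Fintype V] (G : SimpleGraph V) (n : ℕ) (σ : ZMod n → V) : Prop :=
  Function.Bijective σ ∧ ∀ i : ZMod n, G.Adj (σ i) (σ (i + 1))

/-- A vertex is problematic if it has degree at most `2k` or belongs to `W`. -/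
def Problematic {V : Type} [Fintype V] [DecidableEq V] (G : SimpleGraph V)
    [DecidableRel G.Adj] (W : Finset V) (k : ℕ) (v : V) : Prop :=
  G.degree v ≤ 2 * k ∨ v ∈ W

/-- `G` has a cycle of length `ℓ` passing through all vertices of `S`. -/
def HasCycleThrough {V : Type} (G : SimpleGraph V) (ℓ : ℕ) (S : Set V) : Prop :=
  ∃ (u : V) (w : G.Walk u u), w.IsCycle ∧ w.length = ℓ ∧ ∀ x ∈ S, x ∈ w.support

/-- Assumption (★) with constant `c`: `G` is a graph on `n` vertices with Hamilton cycle
(order) `σ`, independence number at most `k`, `W` has at most `20k²` vertices, `G` has no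
cycle of length `n − 1` through all of `W`, and `n ≥ c·k^(11/5)`. -/
def StarAssumption {V : Type} [Fintype V] [DecidableEq V] (G : SimpleGraph V) [DecidableRel G.Adj]
    (n k : ℕ) (σ : ZMod n → V) (W : Finset V) (c : ℝ) : Prop :=
  Fintype.card V = n ∧ IsHamOrder G n σ ∧
  (∀ s : Finset V, (∀ u ∈ s, ∀ v ∈ s, u ≠ v → ¬ G.Adj u v) → s.card ≤ k) ∧
  W.card ≤ 20 * k ^ 2 ∧
  ¬ HasCycleThrough G (n - 1) (W : Set V) ∧
  c * (k : ℝ) ^ ((11 : ℝ) / 5) ≤ (n : ℝ)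

/-- Two vertices are consecutive if they are neighbours on the Hamilton cycle. -/
def Consec {V : Type} (n : ℕ) (σ : ZMod n → V) (u v : V) : Prop :=
  ∃ i : ZMod n, (σ i = u ∧ σ (i + 1) = v) ∨ (σ i = v ∧ σ (i + 1) = u)

/-- A continuous set of vertices: one forming a subpath (interval) of the Hamilton cycle. -/
def ContinuousSet {V : Type} [DecidableEq V] (n : ℕ) (σ : ZMod n → V) (S : Finset V) : Prop :=
  ∃ (i : ZMod n) (m : ℕ), S = (Finset.range m).image (fun j : ℕ => σ (i + (j : ZMod n)))

/-- `B` is a continuous closure of `A`: a minimum-size continuous set containing `A`. -/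
def IsClosure {V : Type} [DecidableEq V] (n : ℕ) (σ : ZMod n → V) (A B : Finset V) : Prop :=
  ContinuousSet n σ B ∧ A ⊆ B ∧
    ∀ B' : Finset V, ContinuousSet n σ B' → A ⊆ B' → B.card ≤ B'.card

/-- An arc-system: a family of arcs together with a choice of continuous closure for each
arc, such that closures of distinct arcs are disjoint, closures contain no problematic
vertex, and no arc contains two consecutive vertices. -/
structure ArcSystem {V : Type} [Fintype V] [DecidableEq V] (G : SimpleGraph V)
    [DecidableRel G.Adj] (n k : ℕ) (σ : ZMod n → V) (W : Finset V) where
  arcs : Finset (Finset V)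
  cl : Finset V → Finset V
  closure_spec : ∀ A ∈ arcs, IsClosure n σ A (cl A)
  closures_disjoint : ∀ A ∈ arcs, ∀ B ∈ arcs, A ≠ B → Disjoint (cl A) (cl B)
  no_problematic : ∀ A ∈ arcs, ∀ v ∈ cl A, ¬ Problematic G W k v
  no_consec : ∀ A ∈ arcs, ∀ u ∈ A, ∀ v ∈ A, u ≠ v → ¬ Consec n σ u v

namespace ArcSystem

variable {V : Type} [Fintype V] [DecidableEq V] {G : SimpleGraph V} [DecidableRel G.Adj]
  {n k : ℕ} {σ : ZMod n → V} {W : Finset V}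

/-- An arc-system is independent if every closure has at most `k` vertices. -/
def Independent (𝒜 : ArcSystem G n k σ W) : Prop :=
  ∀ A ∈ 𝒜.arcs, (𝒜.cl A).card ≤ k

/-- Every arc of the system has at least `l` vertices. -/
def LengthGe (𝒜 : ArcSystem G n k σ W) (l : ℕ) : Prop :=
  ∀ A ∈ 𝒜.arcs, l ≤ A.card

end ArcSystem

/-- A vertex set `s` is `M₂`-free (for `G`) if the subgraph induced by `s`
contains no two vertex-disjoint edges. -/
def M2Free {V : Type} (G : SimpleGraph V) (s : Finset V) : Prop :=
  ¬ ∃ a b x y : V, a ∈ s ∧ b ∈ s ∧ x ∈ s ∧ y ∈ s ∧ G.Adj a b ∧ G.Adj x y ∧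
      a ≠ x ∧ a ≠ y ∧ b ≠ x ∧ b ≠ y

namespace ArcSystem

variable {V : Type} [Fintype V] [DecidableEq V] {G : SimpleGraph V} [DecidableRel G.Adj]
  {n k : ℕ} {σ : ZMod n → V} {W : Finset V}

/-- An arc-system is simple if it is independent and any two distinct arcs induce an
`M₂`-free subgraph of `G`. -/
def Simple (𝒜 : ArcSystem G n k σ W) : Prop :=
  𝒜.Independent ∧ ∀ A ∈ 𝒜.arcs, ∀ B ∈ 𝒜.arcs, A ≠ B → M2Free G (A ∪ B)

end ArcSystem

/-- `G[𝒜]` contains an independent set of size at least `m`. -/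
def HasIndepInArcs {V : Type} [Fintype V] [DecidableEq V] (G : SimpleGraph V)
    [DecidableRel G.Adj] {n k : ℕ} {σ : ZMod n → V} {W : Finset V}
    (𝒜 : ArcSystem G n k σ W) (m : ℕ) : Prop :=
  ∃ I : Finset V, (∀ v ∈ I, ∃ A ∈ 𝒜.arcs, v ∈ A) ∧
    (∀ u ∈ I, ∀ v ∈ I, u ≠ v → ¬ G.Adj u v) ∧ m ≤ I.card

/-- The constants `a_p = 10·3^p`. -/
def aP (p : ℕ) : ℕ := 10 * 3 ^ p

/-- The constants `b_p = 1000^p·4^(p²)`. -/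
def bP (p : ℕ) : ℕ := 1000 ^ p * 4 ^ (p ^ 2)

namespace Statement3Proof

open SimpleGraph

variable {V : Type} {G : SimpleGraph V}




def walkOfFun (G : SimpleGraph V) : (m : ℕ) → (f : ℕ → V) → (∀ i < m, G.Adj (f i) (f (i+1))) →
    G.Walk (f 0) (f m)
  | 0, _, _ => SimpleGraph.Walk.nil
  | (m+1), f, h => SimpleGraph.Walk.cons (h 0 (Nat.succ_pos m))
      (walkOfFun G m (fun i => f (i+1)) (fun i hi => h (i+1) (by omega)))

lemma length_walkOfFun : ∀ (m : ℕ) (f : ℕ → V) (h : ∀ i < m, G.Adj (f i) (f (i+1))),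
    (walkOfFun G m f h).length = m
  | 0, _, _ => rfl
  | (m+1), f, h => by
    simp [walkOfFun, length_walkOfFun m]

lemma support_walkOfFun : ∀ (m : ℕ) (f : ℕ → V) (h : ∀ i < m, G.Adj (f i) (f (i+1))),
    (walkOfFun G m f h).support = (List.range (m+1)).map f
  | 0, _, _ => rfl
  | (m+1), f, h => by
    rw [walkOfFun, SimpleGraph.Walk.support_cons, support_walkOfFun m,
      List.range_succ_eq_map (n := m+1), List.map_cons, List.map_map]
    rfl

lemma edges_walkOfFun : ∀ (m : ℕ) (f : ℕ → V) (h : ∀ i < m, G.Adj (f i) (f (i+1))),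
    (walkOfFun G m f h).edges = (List.range m).map (fun i => s(f i, f (i+1)))
  | 0, _, _ => rfl
  | (m+1), f, h => by
    rw [walkOfFun, SimpleGraph.Walk.edges_cons, edges_walkOfFun m,
      List.range_succ_eq_map (n := m), List.map_cons, List.map_map]
    rfl

/-- build a cycle from a function -/
lemma cycle_of_fun (m : ℕ) (hm : 3 ≤ m) (f : ℕ → V)
    (hadj : ∀ i < m, G.Adj (f i) (f (i+1))) (hcl : f m = f 0)
    (hinj : ∀ i < m, ∀ j < m, f i = f j → i = j) :
    ∃ (u : V) (w : G.Walk u u), w.IsCycle ∧ w.length = m ∧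
      ∀ x, x ∈ w.support ↔ ∃ i < m, f i = x := by
  refine ⟨f 0, (walkOfFun G m f hadj).copy rfl hcl, ?_, ?_, ?_⟩
  · rw [SimpleGraph.Walk.isCycle_def]
    refine ⟨?_, ?_, ?_⟩
    · rw [SimpleGraph.Walk.isTrail_def, SimpleGraph.Walk.edges_copy, edges_walkOfFun]
      refine List.Nodup.map_on ?_ List.nodup_range
      intro i hi j hj hij
      rw [List.mem_range] at hi hj
      rw [Sym2.eq_iff] at hij
      -- case analysis
      rcases hij with ⟨h1, h2⟩ | ⟨h1, h2⟩
      · -- f i = f j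
        rcases Nat.lt_or_ge (j+1) m with hj1 | hj1
        · rcases Nat.lt_or_ge (i+1) m with hi1 | hi1
          · exact hinj i hi j hj h1
          · exact hinj i hi j hj h1
        · exact hinj i hi j hj h1
      · -- f i = f (j+1), f (i+1) = f j
        exfalso
        rcases Nat.lt_or_ge (j+1) m with hj1 | hj1
        · have hij' : i = j + 1 := hinj i hi (j+1) hj1 h1
          rcases Nat.lt_or_ge (i+1) m with hi1 | hi1
          · have := hinj (i+1) hi1 j hj h2; omega
          · -- i+1 = m
            have him : i + 1 = m := by omega
            have : f 0 = f j := by rw [← hcl, ← him]; exact h2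
            have := hinj 0 (by omega) j hj this
            omega
        · -- j+1 = m
          have hjm : j + 1 = m := by omega
          have : f i = f 0 := by rw [h1, hjm, hcl]
          have hi0 : i = 0 := hinj i hi 0 (by omega) this
          have hi1 : i + 1 < m := by omega
          have := hinj (i+1) hi1 j hj h2
          omega
    · intro hnil
      have hl : ((walkOfFun G m f hadj).copy rfl hcl).length = m := by
        rw [SimpleGraph.Walk.length_copy, length_walkOfFun]
      rw [hnil] at hl
      simp at hl
      omega
    · rw [SimpleGraph.Walk.support_copy, support_walkOfFun,
        List.range_succ_eq_map, List.map_cons, List.tail_cons, List.map_map]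
      refine List.Nodup.map_on ?_ List.nodup_range
      intro i hi j hj hij
      rw [List.mem_range] at hi hj
      simp only [Function.comp, Nat.succ_eq_add_one] at hij
      rcases Nat.lt_or_ge (i+1) m with hi1 | hi1
      · rcases Nat.lt_or_ge (j+1) m with hj1 | hj1
        · exact Nat.succ_injective (hinj _ hi1 _ hj1 hij)
        · exfalso
          have hjm : j + 1 = m := by omega
          have : f (i+1) = f 0 := by rw [hij, hjm, hcl]
          have := hinj (i+1) hi1 0 (by omega) this
          omega
      · rcases Nat.lt_or_ge (j+1) m with hj1 | hj1
        · exfalso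
          have him : i + 1 = m := by omega
          have : f 0 = f (j+1) := by rw [← hcl, ← him]; exact hij
          have := hinj 0 (by omega) (j+1) hj1 this
          omega
        · omega
  · rw [SimpleGraph.Walk.length_copy, length_walkOfFun]
  · intro x
    rw [SimpleGraph.Walk.support_copy, support_walkOfFun]
    simp only [List.mem_map, List.mem_range]
    constructor
    · rintro ⟨i, hi, rfl⟩
      rcases Nat.lt_or_ge i m with h | h
      · exact ⟨i, h, rfl⟩
      · have : i = m := by omega
        exact ⟨0, by omega, by rw [← hcl, this]⟩
    · rintro ⟨i, hi, rfl⟩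
      exact ⟨i, by omega, rfl⟩





lemma support_eq_map_getVert : ∀ {u v : V} (w : G.Walk u v),
    w.support = (List.range (w.length+1)).map w.getVert
  | _, _, SimpleGraph.Walk.nil => rfl
  | _, _, SimpleGraph.Walk.cons h q => by
    rw [SimpleGraph.Walk.support_cons, support_eq_map_getVert q,
      SimpleGraph.Walk.length_cons, List.range_succ_eq_map (n := q.length + 1),
      List.map_cons, List.map_map]
    rfl

lemma fun_of_cycle {u : V} (w : G.Walk u u) (hc : w.IsCycle) :
    (∀ i < w.length, G.Adj (w.getVert i) (w.getVert (i+1))) ∧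
    w.getVert w.length = w.getVert 0 ∧
    (∀ i < w.length, ∀ j < w.length, w.getVert i = w.getVert j → i = j) ∧
    (∀ x, x ∈ w.support ↔ ∃ i < w.length, w.getVert i = x) := by
  have hm : 3 ≤ w.length := hc.three_le_length
  have htail : w.support.tail = (List.range w.length).map (fun i => w.getVert (i+1)) := by
    rw [support_eq_map_getVert, List.range_succ_eq_map, List.map_cons, List.tail_cons,
      List.map_map]
    rfl
  have hnd : ((List.range w.length).map (fun i => w.getVert (i+1))).Nodup := by
    rw [← htail]; exact hc.2
  have hinj1 : ∀ i ∈ List.range w.length, ∀ j ∈ List.range w.length,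
      w.getVert (i+1) = w.getVert (j+1) → i = j := List.inj_on_of_nodup_map hnd
  refine ⟨fun i hi => w.adj_getVert_succ hi, by simp, ?_, ?_⟩
  · intro i hi j hj hij
    rcases Nat.eq_zero_or_pos i with rfl | hi0
    · rcases Nat.eq_zero_or_pos j with rfl | hj0
      · rfl
      · exfalso
        have h1 : w.getVert ((w.length - 1) + 1) = w.getVert ((j-1)+1) := by
          have e1 : (w.length - 1) + 1 = w.length := by omega
          have e2 : (j-1)+1 = j := by omega
          rw [e1, e2, SimpleGraph.Walk.getVert_length, ← hij, SimpleGraph.Walk.getVert_zero]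
        have := hinj1 _ (by rw [List.mem_range]; omega) _ (by rw [List.mem_range]; omega) h1
        omega
    · rcases Nat.eq_zero_or_pos j with rfl | hj0
      · exfalso
        have h1 : w.getVert ((w.length - 1) + 1) = w.getVert ((i-1)+1) := by
          have e1 : (w.length - 1) + 1 = w.length := by omega
          have e2 : (i-1)+1 = i := by omega
          rw [e1, e2, SimpleGraph.Walk.getVert_length, hij, SimpleGraph.Walk.getVert_zero]
        have := hinj1 _ (by rw [List.mem_range]; omega) _ (by rw [List.mem_range]; omega) h1
        omega
      · have h1 : w.getVert ((i-1)+1) = w.getVert ((j-1)+1) := by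
          have e1 : (i-1)+1 = i := by omega
          have e2 : (j-1)+1 = j := by omega
          rw [e1, e2]; exact hij
        have := hinj1 _ (by rw [List.mem_range]; omega) _ (by rw [List.mem_range]; omega) h1
        omega
  · intro x
    rw [SimpleGraph.Walk.mem_support_iff_exists_getVert]
    constructor
    · rintro ⟨i, rfl, hi⟩
      rcases Nat.lt_or_ge i w.length with h | h
      · exact ⟨i, h, rfl⟩
      · have : i = w.length := by omega
        refine ⟨0, by omega, ?_⟩
        rw [this, SimpleGraph.Walk.getVert_length, SimpleGraph.Walk.getVert_zero]
    · rintro ⟨i, hi, rfl⟩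
      exact ⟨i, rfl, by omega⟩





lemma insert_good (m t : ℕ) (f : ℕ → V) (v : V) (ht : t < m)
    (hadj : ∀ i < m, G.Adj (f i) (f (i+1))) (hcl : f m = f 0)
    (hinj : ∀ i < m, ∀ j < m, f i = f j → i = j)
    (hv : ∀ i < m, f i ≠ v)
    (hv1 : G.Adj v (f t)) (hv2 : G.Adj v (f (t+1))) :
    ∃ g : ℕ → V, (∀ i < m+1, G.Adj (g i) (g (i+1))) ∧ g (m+1) = g 0 ∧
      (∀ i < m+1, ∀ j < m+1, g i = g j → i = j) ∧
      (∀ x, (∃ i < m, f i = x) → ∃ i < m+1, g i = x) := by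
  set g : ℕ → V := fun i => if i ≤ t then f i else if i = t+1 then v else f (i-1) with hg
  have hA : ∀ i, i ≤ t → g i = f i := by
    intro i h; rw [hg]; exact if_pos h
  have hB : g (t+1) = v := by
    rw [hg]; simp only []; rw [if_neg (by omega)]; simp
  have hC : ∀ i, t+1 < i → g i = f (i-1) := by
    intro i h; rw [hg]; simp only []; rw [if_neg (by omega), if_neg (by omega)]
  refine ⟨g, ?_, ?_, ?_, ?_⟩
  · intro i hi
    rcases Nat.lt_trichotomy i t with h1 | h1 | h1
    · rw [hA i (by omega), hA (i+1) (by omega)]; exact hadj i (by omega)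
    · subst h1
      rw [hA i le_rfl, hB]; exact hv1.symm
    · rcases Nat.lt_or_ge (t+1) i with h2 | h2
      · rw [hC i h2, hC (i+1) (by omega)]
        have := hadj (i-1) (by omega)
        rw [show i - 1 + 1 = i from by omega] at this
        exact this
      · have h3 : i = t + 1 := by omega
        subst h3
        rw [hB, hC (t+2) (by omega), show t + 2 - 1 = t + 1 from rfl]
        exact hv2
  · rw [hC (m+1) (by omega), hA 0 (by omega), show m + 1 - 1 = m from rfl, hcl]
  · intro i hi j hj hij
    rcases Nat.lt_trichotomy i (t+1) with h1 | h1 | h1 <;>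
      rcases Nat.lt_trichotomy j (t+1) with h2 | h2 | h2
    · rw [hA i (by omega), hA j (by omega)] at hij
      exact hinj i (by omega) j (by omega) hij
    · rw [hA i (by omega), h2, hB] at hij
      exact absurd hij (hv i (by omega))
    · rw [hA i (by omega), hC j h2] at hij
      have := hinj i (by omega) (j-1) (by omega) hij
      omega
    · rw [h1, hB, hA j (by omega)] at hij
      exact absurd hij.symm (hv j (by omega))
    · omega
    · rw [h1, hB, hC j h2] at hij
      exact absurd hij.symm (hv (j-1) (by omega))
    · rw [hC i h1, hA j (by omega)] at hij
      have := hinj (i-1) (by omega) j (by omega) hij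
      omega
    · rw [hC i h1, h2, hB] at hij
      exact absurd hij (hv (i-1) (by omega))
    · rw [hC i h1, hC j h2] at hij
      have := hinj (i-1) (by omega) (j-1) (by omega) hij
      omega
  · rintro x ⟨i, hi, rfl⟩
    rcases Nat.lt_or_ge t i with h1 | h1
    · refine ⟨i+1, by omega, ?_⟩
      rw [hC (i+1) (by omega), show i + 1 - 1 = i from rfl]
    · exact ⟨i, by omega, hA i h1⟩

lemma insert_reroute (m a b : ℕ) (f : ℕ → V) (v : V) (hab : a < b) (hb : b < m)
    (hadj : ∀ i < m, G.Adj (f i) (f (i+1))) (hcl : f m = f 0)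
    (hinj : ∀ i < m, ∀ j < m, f i = f j → i = j)
    (hv : ∀ i < m, f i ≠ v)
    (hva : G.Adj v (f a)) (hvb : G.Adj v (f b))
    (hcross : G.Adj (f (a+1)) (f (b+1))) :
    ∃ g : ℕ → V, (∀ i < m+1, G.Adj (g i) (g (i+1))) ∧ g (m+1) = g 0 ∧
      (∀ i < m+1, ∀ j < m+1, g i = g j → i = j) ∧
      (∀ x, (∃ i < m, f i = x) → ∃ i < m+1, g i = x) := by
  set g : ℕ → V := fun i =>
    if i = 0 ∨ i = m+1 then v
    else if i ≤ a+1 then f (a+1-i)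
    else if i ≤ m+a-b then f (m+a+1-i)
    else f (i+b-m) with hg
  have hO : ∀ i, i = 0 ∨ i = m+1 → g i = v := by
    intro i h; rw [hg]; exact if_pos h
  have hA : ∀ i, 1 ≤ i → i ≤ a+1 → g i = f (a+1-i) := by
    intro i h1 h2; rw [hg]; simp only []
    rw [if_neg (by omega), if_pos h2]
  have hB : ∀ i, a+1 < i → i ≤ m+a-b → g i = f (m+a+1-i) := by
    intro i h1 h2; rw [hg]; simp only []
    rw [if_neg (by omega), if_neg (by omega), if_pos h2]
  have hC : ∀ i, m+a-b < i → i ≤ m → g i = f (i+b-m) := by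
    intro i h1 h2; rw [hg]; simp only []
    rw [if_neg (by omega), if_neg (by omega), if_neg (by omega)]
  -- value of g at the junction i = a+1 (both branch2 formula and f (b+1)-like)
  have hfm0 : ∀ j, j = m → f j = f 0 := by intro j h; rw [h, hcl]
  refine ⟨g, ?_, ?_, ?_, ?_⟩
  · intro i hi
    rcases Nat.eq_zero_or_pos i with rfl | hi0
    · rw [hO 0 (Or.inl rfl), hA 1 le_rfl (by omega), show a+1-1 = a from rfl]
      exact hva
    · rcases Nat.lt_or_ge i (a+1) with h1 | h1
      · -- 1 ≤ i ≤ a : within reversed initial segment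
        rw [hA i hi0 (by omega), hA (i+1) (by omega) (by omega)]
        have := hadj (a-i) (by omega)
        rw [show a+1-i = a-i+1 from by omega, show a+1-(i+1) = a-i from by omega]
        exact this.symm
      · rcases Nat.lt_or_ge i (m+a-b) with h2 | h2
        · -- a+1 ≤ i < m+a-b : next is branch B
          have e2 : g (i+1) = f (m+a-i) := by
            rw [hB (i+1) (by omega) (by omega), show m+a+1-(i+1) = m+a-i from by omega]
          rcases Nat.eq_or_lt_of_le h1 with h3 | h3
          · -- i = a+1 : g i = f 0 = f m, next = f (m-1)
            have h3' : i = a + 1 := by omega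
            subst h3'
            rw [hA (a+1) (by omega) le_rfl, e2,
              show a+1-(a+1) = 0 from by omega, show m+a-(a+1) = m-1 from by omega]
            have := hadj (m-1) (by omega)
            rw [show m-1+1 = m from by omega, hcl] at this
            exact this.symm
          · rw [hB i h3 (by omega), e2]
            have := hadj (m+a-i) (by omega)
            rw [show m+a-i+1 = m+a+1-i from by omega] at this
            exact this.symm
        · rcases Nat.eq_or_lt_of_le h2 with h3 | h3
          · -- i = m+a-b : crossing edge from f(b+1)-value to f(a+1)
            have e2 : g (i+1) = f (a+1) := by
              rw [hC (i+1) (by omega) (by omega), show i+1+b-m = a+1 from by omega]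
            have e1 : g i = f (b+1) := by
              rcases Nat.eq_or_lt_of_le h1 with h4 | h4
              · -- b = m-1, g i = f 0 = f m = f (b+1)
                rw [← h4, hA (a+1) (by omega) le_rfl, show a+1-(a+1) = 0 from by omega,
                  ← hcl, show m = b+1 from by omega]
              · rw [hB i h4 (by omega), show m+a+1-i = b+1 from by omega]
            rw [e1, e2]
            exact hcross.symm
          · -- m+a-b < i ≤ m
            rcases Nat.lt_or_ge i m with h4 | h4
            · rw [hC i h3 (by omega), hC (i+1) (by omega) (by omega)]
              have := hadj (i+b-m) (by omega)
              rw [show i+b-m+1 = i+1+b-m from by omega] at this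
              exact this
            · have h5 : i = m := by omega
              rw [h5, hC m (by omega) le_rfl, hO (m+1) (Or.inr rfl),
                show m+b-m = b from by omega]
              exact hvb.symm
  · rw [hO (m+1) (Or.inr rfl), hO 0 (Or.inl rfl)]
  · intro i hi j hj hij
    -- g takes value v exactly at 0 (in range), f-values elsewhere with disjoint index ranges
    have key : ∀ x, 1 ≤ x → x ≤ m → ∃ ix < m, g x = f ix ∧
        ((1 ≤ x ∧ x ≤ a+1 ∧ ix = a+1-x) ∨ (a+1 < x ∧ x ≤ m+a-b ∧ ix = m+a+1-x) ∨
         (m+a-b < x ∧ x ≤ m ∧ ix = x+b-m)) := by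
      intro x h1 h2
      rcases Nat.lt_or_ge x (a+2) with p1 | p1
      · exact ⟨a+1-x, by omega, hA x h1 (by omega), Or.inl ⟨h1, by omega, rfl⟩⟩
      · rcases Nat.lt_or_ge x (m+a-b+1) with p2 | p2
        · exact ⟨m+a+1-x, by omega, hB x (by omega) (by omega), Or.inr (Or.inl ⟨by omega, by omega, rfl⟩)⟩
        · exact ⟨x+b-m, by omega, hC x (by omega) h2, Or.inr (Or.inr ⟨by omega, h2, rfl⟩)⟩
    rcases Nat.eq_zero_or_pos i with rfl | hi0
    · rcases Nat.eq_zero_or_pos j with rfl | hj0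
      · rfl
      · exfalso
        obtain ⟨jx, hjx, e, _⟩ := key j hj0 (by omega)
        rw [hO 0 (Or.inl rfl), e] at hij
        exact hv jx hjx hij.symm
    · rcases Nat.eq_zero_or_pos j with rfl | hj0
      · exfalso
        obtain ⟨ix, hix, e, _⟩ := key i hi0 (by omega)
        rw [hO 0 (Or.inl rfl), e] at hij
        exact hv ix hix hij
      · obtain ⟨ix, hix, ei, hcasei⟩ := key i hi0 (by omega)
        obtain ⟨jx, hjx, ej, hcasej⟩ := key j hj0 (by omega)
        rw [ei, ej] at hij
        have : ix = jx := hinj ix hix jx hjx hij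
        -- now ranges: branch determined by index value
        rcases hcasei with ⟨q1, q2, q3⟩ | ⟨q1, q2, q3⟩ | ⟨q1, q2, q3⟩ <;>
          rcases hcasej with ⟨r1, r2, r3⟩ | ⟨r1, r2, r3⟩ | ⟨r1, r2, r3⟩ <;>
          omega
  · rintro x ⟨i, hi, rfl⟩
    rcases Nat.lt_or_ge i (a+1) with h1 | h1
    · refine ⟨a+1-i, by omega, ?_⟩
      rw [hA (a+1-i) (by omega) (by omega), show a+1-(a+1-i) = i from by omega]
    · rcases Nat.lt_or_ge i (b+1) with h2 | h2
      · refine ⟨i+m-b, by omega, ?_⟩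
        rw [hC (i+m-b) (by omega) (by omega), show i+m-b+b-m = i from by omega]
      · refine ⟨m+a+1-i, by omega, ?_⟩
        rw [hB (m+a+1-i) (by omega) (by omega), show m+a+1-(m+a+1-i) = i from by omega]

lemma step {V : Type} [Fintype V] [DecidableEq V] (G : SimpleGraph V) [DecidableRel G.Adj]
    {n k m : ℕ} (W : Finset V) (f : ℕ → V)
    (hcard : Fintype.card V = n)
    (hindep : ∀ s : Finset V, (∀ u ∈ s, ∀ v ∈ s, u ≠ v → ¬ G.Adj u v) → s.card ≤ k)
    (hm1 : n - k ≤ m) (hm2 : m + 2 ≤ n) (hm3 : 3 ≤ m) (hkn : k ≤ n)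
    (hadj : ∀ i < m, G.Adj (f i) (f (i+1))) (hcl : f m = f 0)
    (hinj : ∀ i < m, ∀ j < m, f i = f j → i = j)
    (hprob : ∀ x, Problematic G W k x → ∃ i < m, f i = x) :
    ∃ g : ℕ → V, (∀ i < m+1, G.Adj (g i) (g (i+1))) ∧ g (m+1) = g 0 ∧
      (∀ i < m+1, ∀ j < m+1, g i = g j → i = j) ∧
      (∀ x, Problematic G W k x → ∃ i < m+1, g i = x) := by
  classical
  set S : Finset V := (Finset.range m).image f with hS
  have hScard : S.card = m := by
    rw [hS, Finset.card_image_of_injOn, Finset.card_range]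
    intro i hi j hj hij
    exact hinj i (Finset.mem_range.mp hi) j (Finset.mem_range.mp hj) hij
  have hmemS : ∀ x, x ∈ S ↔ ∃ i < m, f i = x := by
    intro x
    simp only [hS, Finset.mem_image, Finset.mem_range]
  -- pick a vertex off the cycle
  have hcompl : (Sᶜ).Nonempty := by
    rw [← Finset.card_pos, Finset.card_compl, hScard, hcard]
    omega
  obtain ⟨v, hvS⟩ := hcompl
  rw [Finset.mem_compl] at hvS
  have hfne : ∀ i < m, f i ≠ v := by
    intro i hi e
    exact hvS ((hmemS v).mpr ⟨i, hi, e⟩)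
  have hvnp : ¬ Problematic G W k v := by
    intro h
    obtain ⟨i, hi, e⟩ := hprob v h
    exact hfne i hi e
  have hdeg : 2 * k + 1 ≤ G.degree v := by
    by_contra h
    exact hvnp (Or.inl (by omega))
  -- neighbours of v on the cycle
  set N : Finset V := G.neighborFinset v with hN
  have hNS : (N \ S).card ≤ n - m - 1 := by
    have hsub : N \ S ⊆ (Finset.univ \ S).erase v := by
      intro x hx
      rw [Finset.mem_sdiff] at hx
      rw [Finset.mem_erase, Finset.mem_sdiff]
      refine ⟨?_, Finset.mem_univ x, hx.2⟩
      intro e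
      subst e
      have := hx.1
      rw [hN, SimpleGraph.mem_neighborFinset] at this
      exact G.irrefl this
    calc (N \ S).card ≤ ((Finset.univ \ S).erase v).card := Finset.card_le_card hsub
      _ ≤ (Finset.univ \ S).card - 1 := by
          rw [Finset.card_erase_of_mem (by rw [Finset.mem_sdiff]; exact ⟨Finset.mem_univ v, hvS⟩)]
      _ = n - m - 1 := by
          rw [Finset.card_sdiff_of_subset (Finset.subset_univ S), Finset.card_univ, hcard, hScard]
  have hNcap : k + 2 ≤ (N ∩ S).card := by
    have h1 : (N ∩ S).card + (N \ S).card = N.card := Finset.card_inter_add_card_sdiff N S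
    have h2 : N.card = G.degree v := by rw [hN, SimpleGraph.card_neighborFinset_eq_degree]
    omega
  set I : Finset ℕ := (Finset.range m).filter (fun i => G.Adj v (f i)) with hI
  have hIm : ∀ i ∈ I, i < m ∧ G.Adj v (f i) := by
    intro i hi
    rw [hI, Finset.mem_filter, Finset.mem_range] at hi
    exact hi
  have hNSI : N ∩ S = I.image f := by
    ext x
    constructor
    · intro hx
      rw [Finset.mem_inter] at hx
      have h1 : G.Adj v x := by
        have := hx.1
        rwa [hN, SimpleGraph.mem_neighborFinset] at this
      obtain ⟨i, hi, rfl⟩ := (hmemS x).mp hx.2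
      exact Finset.mem_image.mpr
        ⟨i, by rw [hI, Finset.mem_filter, Finset.mem_range]; exact ⟨hi, h1⟩, rfl⟩
    · intro hx
      obtain ⟨i, hiI, rfl⟩ := Finset.mem_image.mp hx
      obtain ⟨h1, h2⟩ := hIm i hiI
      rw [Finset.mem_inter]
      exact ⟨by rw [hN, SimpleGraph.mem_neighborFinset]; exact h2, (hmemS _).mpr ⟨i, h1, rfl⟩⟩
  have hIcard : k + 2 ≤ I.card := by
    have := Finset.card_image_le (s := I) (f := f)
    rw [← hNSI] at this
    omega
  -- the successor map
  have hmod : ∀ i < m, f ((i+1) % m) = f (i+1) := by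
    intro i hi
    rcases Nat.lt_or_ge (i+1) m with h | h
    · rw [Nat.mod_eq_of_lt h]
    · have e : i + 1 = m := by omega
      rw [e, Nat.mod_self, hcl]
  set T : Finset V := insert v (I.image (fun i => f ((i+1) % m))) with hT
  have hTcard : k + 3 ≤ T.card := by
    have himg : (I.image (fun i => f ((i+1) % m))).card = I.card := by
      apply Finset.card_image_of_injOn
      intro i hi j hj hij
      obtain ⟨hi', _⟩ := hIm i hi
      obtain ⟨hj', _⟩ := hIm j hj
      have h1 : (i+1) % m = (j+1) % m :=
        hinj _ (Nat.mod_lt _ (by omega)) _ (Nat.mod_lt _ (by omega)) hij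
      rcases Nat.lt_or_ge (i+1) m with p | p <;> rcases Nat.lt_or_ge (j+1) m with q | q
      · rw [Nat.mod_eq_of_lt p, Nat.mod_eq_of_lt q] at h1; omega
      · rw [Nat.mod_eq_of_lt p, show j+1 = m from by omega, Nat.mod_self] at h1; omega
      · rw [Nat.mod_eq_of_lt q, show i+1 = m from by omega, Nat.mod_self] at h1; omega
      · omega
    have hvT : v ∉ I.image (fun i => f ((i+1) % m)) := by
      rw [Finset.mem_image]
      rintro ⟨i, hi, e⟩
      obtain ⟨hi', _⟩ := hIm i hi
      exact hfne _ (Nat.mod_lt _ (by omega)) e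
    rw [hT, Finset.card_insert_of_notMem hvT, himg]
    omega
  -- find an edge inside T
  have hedge : ∃ x ∈ T, ∃ y ∈ T, x ≠ y ∧ G.Adj x y := by
    by_contra h
    push_neg at h
    have := hindep T (fun u hu w hw hne => h u hu w hw hne)
    omega
  obtain ⟨x, hx, y, hy, hxy, hadjxy⟩ := hedge
  -- helper to apply the good case
  have good : ∀ t, t ∈ I → G.Adj v (f ((t+1) % m)) →
      ∃ g : ℕ → V, (∀ i < m+1, G.Adj (g i) (g (i+1))) ∧ g (m+1) = g 0 ∧
      (∀ i < m+1, ∀ j < m+1, g i = g j → i = j) ∧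
      (∀ x, (∃ i < m, f i = x) → ∃ i < m+1, g i = x) := by
    intro t htI hadjv
    obtain ⟨ht, hvt⟩ := hIm t htI
    rw [hmod t ht] at hadjv
    exact insert_good m t f v ht hadj hcl hinj hfne hvt hadjv
  have main : ∃ g : ℕ → V, (∀ i < m+1, G.Adj (g i) (g (i+1))) ∧ g (m+1) = g 0 ∧
      (∀ i < m+1, ∀ j < m+1, g i = g j → i = j) ∧
      (∀ x, (∃ i < m, f i = x) → ∃ i < m+1, g i = x) := by
    rw [hT, Finset.mem_insert, Finset.mem_image] at hx hy
    rcases hx with rfl | ⟨a, haI, rfl⟩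
    · rcases hy with rfl | ⟨b, hbI, rfl⟩
      · exact absurd rfl hxy
      · exact good b hbI hadjxy
    · rcases hy with rfl | ⟨b, hbI, rfl⟩
      · exact good a haI hadjxy.symm
      · obtain ⟨ha, hva⟩ := hIm a haI
        obtain ⟨hb, hvb⟩ := hIm b hbI
        rw [hmod a ha, hmod b hb] at hadjxy
        have hne : a ≠ b := by rintro rfl; exact absurd rfl hxy
        rcases Nat.lt_or_ge a b with h | h
        · exact insert_reroute m a b f v h hb hadj hcl hinj hfne hva hvb hadjxy
        · exact insert_reroute m b a f v (by omega) ha hadj hcl hinj hfne hvb hva hadjxy.symm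
  obtain ⟨g, h1, h2, h3, h4⟩ := main
  exact ⟨g, h1, h2, h3, fun x hx => h4 x (hprob x hx)⟩


end Statement3Proof

/-- There is a constant `c > 0` such that under Assumption (★) with
constant `c`, `G` contains no cycle of length `ℓ` with `n − k ≤ ℓ ≤ n − 1` passing through
all problematic vertices. -/
theorem statement3 :
    ∃ c : ℝ, 0 < c ∧
      ∀ (V : Type) [Fintype V] [DecidableEq V] (G : SimpleGraph V) [DecidableRel G.Adj]
        (n k : ℕ) (σ : ZMod n → V) (W : Finset V),
        StarAssumption G n k σ W c →
        ∀ ℓ : ℕ, n - k ≤ ℓ → ℓ ≤ n - 1 →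
          ¬ HasCycleThrough G ℓ {v : V | Problematic G W k v} := by
  refine ⟨100, by norm_num, ?_⟩
  intro V _ _ G _ n k σ W star ℓ hl1 hl2 hcyc
  obtain ⟨hcard, hham, hindep, hW, hno, hbig⟩ := star
  obtain ⟨u0, w, hc, hlen, hsupp⟩ := hcyc
  have hk1 : 1 ≤ k := by
    have := hindep {u0} (by
      intro a ha b hb hne
      rw [Finset.mem_singleton] at ha hb
      exact absurd (ha.trans hb.symm) hne)
    simpa using this
  have hn100 : 100 * k ≤ n := by
    have h1 : (1:ℝ) ≤ (k:ℝ) := by exact_mod_cast hk1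
    have h3 : (k:ℝ) ^ (1:ℝ) ≤ (k:ℝ) ^ ((11:ℝ)/5) :=
      Real.rpow_le_rpow_of_exponent_le h1 (by norm_num)
    rw [Real.rpow_one] at h3
    have h4 : ((100 * k : ℕ) : ℝ) ≤ (n:ℝ) := by
      push_cast
      nlinarith [hbig]
    exact_mod_cast h4
  have key : ∀ d m (f : ℕ → V), m + d = n - 1 → n - k ≤ m →
      (∀ i < m, G.Adj (f i) (f (i+1))) → f m = f 0 →
      (∀ i < m, ∀ j < m, f i = f j → i = j) →
      (∀ x, Problematic G W k x → ∃ i < m, f i = x) → False := by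
    intro d
    induction d with
    | zero =>
      intro m f hm hmk hadj hcl hinj hprob
      have hm3 : 3 ≤ m := by omega
      obtain ⟨u', w', hc', hlen', hsupp'⟩ :=
        Statement3Proof.cycle_of_fun m hm3 f hadj hcl hinj
      exact hno ⟨u', w', hc', by rw [hlen']; omega,
        fun x hx => (hsupp' x).mpr (hprob x (Or.inr hx))⟩
    | succ d ih =>
      intro m f hm hmk hadj hcl hinj hprob
      obtain ⟨g, h1, h2, h3, h4⟩ :=
        Statement3Proof.step G W f hcard hindep hmk (by omega) (by omega) (by omega)
          hadj hcl hinj hprob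
      exact ih (m+1) g (by omega) (by omega) h1 h2 h3 h4
  obtain ⟨hadj0, hcl0, hinj0, hsupp0⟩ := Statement3Proof.fun_of_cycle w hc
  rw [hlen] at hadj0 hcl0 hinj0 hsupp0
  exact key (n - 1 - ℓ) ℓ w.getVert (by omega) hl1 hadj0 hcl0 hinj0
    (fun x hx => (hsupp0 x).mp (hsupp x hx))
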